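/- arXiv:2106.11382 — 2 statements merged into one kernel-verified Lean document; each statement's English description precedes it below -/
import Mathlib

section
/- Let R be a nonzero ring whose only idempotents are 0 and 1, and let f : R → S be a ring homomorphism into a finite ring S such that every element of ker f is nilpotent. If α, β ∈ R commute with each other and satisfy α + β = 1, then α is a unit of R or β is a unit of R. -/
lemma exists_pow_idem_aux {M : Type*} [Monoid M] [Finite M] (a : M) :
    ∃ m, 0 < m ∧ IsIdempotentElem (a ^ m) := by
  obtain ⟨i, j, hne, hij⟩ := Finite.exists_ne_map_eq_of_infinite (fun n : ℕ => a ^ n)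
  suffices H : ∀ i j : ℕ, i < j → a ^ i = a ^ j → ∃ m, 0 < m ∧ IsIdempotentElem (a ^ m) by
    rcases hne.lt_or_gt with h | h
    · exact H i j h hij
    · exact H j i h hij.symm
  clear hne hij
  intro i j h hij
  set d := j - i with hd
  have hd1 : 0 < d := by omega
  have hstep : ∀ m, i ≤ m → a ^ (m + d) = a ^ m := by
    intro m hm
    have h1 : m + d = (m - i) + j := by omega
    rw [h1, pow_add, ← hij, ← pow_add]
    congr 1
    omega
  have hk : ∀ k m, i ≤ m → a ^ (m + k * d) = a ^ m := by
    intro k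
    induction k with
    | zero => simp
    | succ n ih =>
        intro m hm
        have h2 : m + (n + 1) * d = (m + n * d) + d := by ring
        rw [h2, hstep _ (by omega), ih m hm]
  have hge : i ≤ (i + 1) * d := by nlinarith
  refine ⟨(i + 1) * d, by positivity, ?_⟩
  show a ^ ((i + 1) * d) * a ^ ((i + 1) * d) = a ^ ((i + 1) * d)
  rw [← pow_add]
  exact hk (i + 1) ((i + 1) * d) hge

theorem stmt_3 {R S : Type*} [Ring R] [Nontrivial R] [Ring S] [Finite S]
    (hid : ∀ e : R, e * e = e → e = 0 ∨ e = 1)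
    (f : R →+* S) (hker : ∀ x : R, f x = 0 → IsNilpotent x)
    (α β : R) (hcomm : α * β = β * α) (hsum : α + β = 1) :
    IsUnit α ∨ IsUnit β := by
  obtain ⟨m, hm, hidem⟩ := exists_pow_idem_aux (f α)
  set y : R := α ^ m with hy
  have hfy : IsIdempotentElem (f y) := by
    simpa [hy, map_pow] using hidem
  have h1 : f (y - y ^ 2) = 0 := by
    simp only [hy, sq, map_sub, map_mul, map_pow]
    rw [hidem.eq, sub_self]
  obtain ⟨N, hN⟩ := hker _ h1
  have hN0 : N ≠ 0 := by
    rintro rfl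
    simp only [pow_zero] at hN
    exact one_ne_zero hN
  have he : IsIdempotentElem (1 - (1 - y ^ N) ^ N) :=
    isIdempotentElem_one_sub_one_sub_pow_pow y N hN
  obtain ⟨k, rfl⟩ := Nat.exists_eq_succ_of_ne_zero hN0
  have hfe : f (1 - (1 - y ^ (k + 1)) ^ (k + 1)) = f y := by
    rw [map_sub, map_one, map_pow, map_sub, map_one, map_pow,
      hfy.pow_succ_eq, hfy.one_sub.pow_succ_eq, sub_sub_cancel]
  rcases hid _ he with h0 | h1
  · right
    have hfy0 : f y = 0 := by rw [← hfe, h0, map_zero]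
    obtain ⟨l, hl⟩ := hker y hfy0
    have hα : IsNilpotent α := ⟨m * l, by rw [pow_mul]; exact hl⟩
    have := hα.isUnit_one_sub
    have hβ : β = 1 - α := by rw [eq_sub_iff_add_eq, add_comm, hsum]
    rwa [← hβ] at this
  · left
    have hf1y : f (1 - y) = 0 := by
      rw [map_sub, map_one, ← hfe, h1, map_one, sub_self]
    have := (hker _ hf1y).isUnit_one_sub
    rw [sub_sub_cancel] at this
    exact (isUnit_pow_iff hm.ne').mp this
end

section
/- Let R be a commutative ring and S : R → R[[t]] a ring homomorphism such that for every x ∈ R the constant term of S(x) is x. Let e, u ∈ R with e·u = 0. Then for every n ≥ 0, the coefficient of t^n in S(e) is annihilated by u^{n+1}. -/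
theorem stmt_14 {R : Type*} [CommRing R] (S : R →+* PowerSeries R)
    (hS : ∀ x : R, PowerSeries.constantCoeff (S x) = x)
    (e u : R) (h : e * u = 0) :
    ∀ n : ℕ, (PowerSeries.coeff n (S e)) * u ^ (n + 1) = 0 := by
  intro n
  induction n using Nat.strong_induction_on with
  | _ n ih =>
    have h0 : S e * S u = 0 := by rw [← map_mul, h, map_zero]
    have hc : ∑ p ∈ Finset.HasAntidiagonal.antidiagonal n,
        PowerSeries.coeff p.1 (S e) * PowerSeries.coeff p.2 (S u) = 0 := by
      rw [← PowerSeries.coeff_mul, h0, map_zero]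
    have hmul : ∑ p ∈ Finset.HasAntidiagonal.antidiagonal n,
        PowerSeries.coeff p.1 (S e) * PowerSeries.coeff p.2 (S u) * u ^ n = 0 := by
      rw [← Finset.sum_mul, hc, zero_mul]
    have hsingle : ∑ p ∈ Finset.HasAntidiagonal.antidiagonal n,
        PowerSeries.coeff p.1 (S e) * PowerSeries.coeff p.2 (S u) * u ^ n
        = PowerSeries.coeff n (S e) * PowerSeries.coeff 0 (S u) * u ^ n := by
      apply Finset.sum_eq_single_of_mem (n, 0)
      · simp [Finset.HasAntidiagonal.mem_antidiagonal]
      · intro p hp hne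
        have hpsum : p.1 + p.2 = n := Finset.HasAntidiagonal.mem_antidiagonal.mp hp
        have hlt : p.1 < n := by
          rcases Nat.lt_or_ge p.1 n with h' | h'
          · exact h'
          · exfalso
            have : p.1 = n := le_antisymm (by omega) h'
            apply hne
            have : p.2 = 0 := by omega
            exact Prod.ext ‹p.1 = n› this
        have hexp : u ^ n = u ^ (p.1 + 1) * u ^ (n - p.1 - 1) := by
          rw [← pow_add]
          congr 1
          omega
        calc PowerSeries.coeff p.1 (S e) * PowerSeries.coeff p.2 (S u) * u ^ n
            = (PowerSeries.coeff p.1 (S e) * u ^ (p.1 + 1)) *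
              (PowerSeries.coeff p.2 (S u) * u ^ (n - p.1 - 1)) := by
              rw [hexp]; ring
          _ = 0 := by rw [ih p.1 hlt, zero_mul]
    have hcoeff0 : PowerSeries.coeff 0 (S u) = u := by
      rw [PowerSeries.coeff_zero_eq_constantCoeff]; exact hS u
    rw [hsingle, hcoeff0] at hmul
    calc PowerSeries.coeff n (S e) * u ^ (n + 1)
        = PowerSeries.coeff n (S e) * u * u ^ n := by ring
      _ = 0 := hmul
end
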